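/- In the dilation setting, let p ∈ P additionally satisfy V(p)V(p)* = π(α_p(1)). Then: (i) V(q)*V(p)TT*V(p)*V(q) = 0, (ii) V(q)*V(p)TT*V(p)*T = 0, and (iii) (T*V(p)T)(T*V(p)*T) = T*π(α_{qp}(1))T. (These identities express that V₁(p)V₁(p)* = π₁(α_p(1)) for the dilated pair π₁(a) = π(a) ⊕ T*π(α_q(a))T, V₁(p) = [[V(p), V(q)*V(p)T],[0, T*V(p)T]].) -/

import Mathlib

open ContinuousLinearMap

theorem stmt_12 {A : Type*} [CStarAlgebra A]
    {P : Type*} [CommMonoid P]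
    (α : P → (A →⋆ₙₐ[ℂ] A))
    (hinj : ∀ p : P, Function.Injective (α p))
    (hcomp : ∀ (p r : P) (a : A), α p (α r a) = α (p * r) a)
    (haligned : ∀ p r : P, α p 1 * α r 1 = α r 1 * α p 1)
    (hhered : ∀ (p : P) (a : A), ∃ h : A, α p h = α p 1 * a * α p 1)
    {H L : Type*}
    [NormedAddCommGroup H] [InnerProductSpace ℂ H] [CompleteSpace H]
    [NormedAddCommGroup L] [InnerProductSpace ℂ L] [CompleteSpace L]
    (π : A →⋆ₐ[ℂ] (H →L[ℂ] H))
    (V : P →* (H →L[ℂ] H))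
    (hiso : ∀ p : P, star (V p) * V p = 1)
    (hcov : ∀ (p : P) (a : A), V p * π a = π (α p a) * V p)
    (q : P) (T : L →L[ℂ] H)
    (hT1 : adjoint T ∘L T = 1)
    (hT2 : T ∘L adjoint T = π (α q 1) - V q * star (V q)) :
    ∀ p : P, V p * star (V p) = π (α p 1) →
      star (V q) * V p * (T ∘L adjoint T) * star (V p) * V q = 0 ∧
      (star (V q) * V p * (T ∘L adjoint T) * star (V p)) ∘L T = 0 ∧
      (adjoint T ∘L (V p ∘L T)) ∘L (adjoint T ∘L (star (V p) ∘L T)) =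
        adjoint T ∘L (π (α (q * p) 1) ∘L T) := by
  intro p hp
  have hπ1 : π (1 : A) = 1 := map_one π
  -- anti-covariance
  have hacov : ∀ (r : P) (a : A), star (V r) * π (α r a) = π a * star (V r) := by
    intro r a
    have h := congrArg star (hcov r (star a))
    simp only [star_mul, map_star, star_star] at h
    exact h.symm
  -- star (V q) kills T T*
  have hVqE : star (V q) * (T ∘L adjoint T) = 0 := by
    rw [hT2, mul_sub, ← mul_assoc, hiso, one_mul]
    have h1 : star (V q) * π (α q 1) = star (V q) := by
      rw [hacov q 1, hπ1, one_mul]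
    rw [h1, sub_self]
  have hTT : ∀ x : L, adjoint T (T x) = x := by
    intro x
    have := ContinuousLinearMap.ext_iff.mp hT1 x
    simpa using this
  have hVqT : ∀ x : L, star (V q) (T x) = 0 := by
    intro x
    have h := ContinuousLinearMap.ext_iff.mp hVqE (T x)
    simpa [mul_apply, comp_apply, hTT] using h
  have hswapV : V p * V q = V q * V p := by
    rw [← map_mul, ← map_mul, mul_comm]
  have hswapS : star (V q) * star (V p) = star (V p) * star (V q) := by
    rw [← star_mul, ← star_mul, hswapV]
  -- the key computation
  have hY : V p * (T ∘L adjoint T) * star (V p) =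
      π (α (q * p) 1) - (V q * V p) * (star (V p) * star (V q)) := by
    rw [hT2, mul_sub, sub_mul]
    congr 1
    · rw [hcov p (α q 1), mul_assoc, hp, ← map_mul, ← map_mul, mul_one, hcomp,
        mul_comm p q]
    · calc V p * (V q * star (V q)) * star (V p)
          = (V p * V q) * (star (V q) * star (V p)) := by
            simp only [mul_assoc]
        _ = (V q * V p) * (star (V p) * star (V q)) := by
            rw [hswapV, hswapS]
  have hX : star (V q) * V p * (T ∘L adjoint T) * star (V p) = 0 := by
    have h : star (V q) * (V p * (T ∘L adjoint T) * star (V p)) =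
        star (V q) * (π (α (q * p) 1) - (V q * V p) * (star (V p) * star (V q))) := by
      rw [hY]
    rw [mul_sub] at h
    have h1 : star (V q) * π (α (q * p) 1) = π (α p 1) * star (V q) := by
      rw [← hcomp q p 1, hacov q (α p 1)]
    have h2 : star (V q) * ((V q * V p) * (star (V p) * star (V q))) =
        π (α p 1) * star (V q) := by
      simp only [← mul_assoc]
      rw [hiso, one_mul, hp]
    rw [h1, h2, sub_self] at h
    calc star (V q) * V p * (T ∘L adjoint T) * star (V p)
        = star (V q) * (V p * (T ∘L adjoint T) * star (V p)) := by
          simp only [mul_assoc]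
      _ = 0 := h
  refine ⟨by rw [hX, zero_mul], by rw [hX, zero_comp], ?_⟩
  ext x
  simp only [comp_apply]
  have h := ContinuousLinearMap.ext_iff.mp hY (T x)
  simp only [mul_apply_eq_comp, comp_apply, _root_.sub_apply] at h
  rw [hVqT x, map_zero, map_zero, map_zero, sub_zero] at h
  rw [h]
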